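/- Let p = 2^m − 1 be a Mersenne prime number with m prime, and let M = 1 + x^a(x+1)^b be a Mersenne prime polynomial over 𝔽₂. Then every irreducible polynomial P ≠ M of degree m over 𝔽₂ divides σ(M^{p−1}) = 1 + M + ⋯ + M^{p−1}. -/

import Mathlib

open Polynomial

theorem any_irreducible_divides_sigma (m p : ℕ) (hm : Nat.Prime m)
    (hpm : p = 2 ^ m - 1) (hp : Nat.Prime p)
    (M : Polynomial (ZMod 2)) (hM : Irreducible M)
    (a b : ℕ) (ha : 0 < a) (hb : 0 < b) (hMab : M = 1 + X ^ a * (X + 1) ^ b)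
    (P : Polynomial (ZMod 2)) (hP : Irreducible P) (hdeg : P.natDegree = m)
    (hne : P ≠ M) :
    P ∣ ∑ i ∈ Finset.range p, M ^ i := by
  have hfact : Fact (Irreducible P) := ⟨hP⟩
  have hP0 : P ≠ 0 := hP.ne_zero
  let pb := AdjoinRoot.powerBasis hP0
  letI : Fintype (AdjoinRoot P) := Module.fintypeOfFintype pb.basis
  have hcard : Fintype.card (AdjoinRoot P) = 2 ^ m := by
    rw [Module.card_eq_pow_finrank (K := ZMod 2), pb.finrank, AdjoinRoot.powerBasis_dim,
      hdeg, ZMod.card]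
  set f : Polynomial (ZMod 2) →+* AdjoinRoot P := AdjoinRoot.mk P with hf
  set x : AdjoinRoot P := f M with hx
  -- x ≠ 0
  have hx0 : x ≠ 0 := by
    intro h
    have hdvd : P ∣ M := (AdjoinRoot.mk_eq_zero).mp h
    have hassoc : Associated P M := hP.associated_of_dvd hM hdvd
    obtain ⟨u, hu⟩ := hassoc
    obtain ⟨c, hc, hcu⟩ := Polynomial.isUnit_iff.mp u.isUnit
    have hc1 : c = 1 := by
      fin_cases c
      · exact absurd hc (not_isUnit_zero (M₀ := ZMod 2))
      · rfl
    rw [hc1, map_one] at hcu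
    rw [← hcu, mul_one] at hu
    exact hne hu
  -- x ≠ 1
  have hx1 : x ≠ 1 := by
    intro h
    have : f (M + 1) = 0 := by
      have h2 : (1 + 1 : Polynomial (ZMod 2)) = 0 := by
        have h3 : (1 + 1 : ZMod 2) = 0 := rfl
        rw [← C_1, ← C_add, h3, C_0]
      rw [map_add, map_one, ← hx, h, ← map_one f, ← map_add, h2, map_zero]
    have hdvd : P ∣ M + 1 := (AdjoinRoot.mk_eq_zero).mp this
    have hMp1 : M + 1 = X ^ a * (X + 1) ^ b := by
      have h2 : (1 + 1 : Polynomial (ZMod 2)) = 0 := by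
        have h3 : (1 + 1 : ZMod 2) = 0 := rfl
        rw [← C_1, ← C_add, h3, C_0]
      rw [hMab, add_comm 1, add_assoc, h2, add_zero]
    rw [hMp1] at hdvd
    have hm2 : 2 ≤ m := hm.two_le
    have : P.natDegree ≤ 1 := by
      rcases hP.prime.dvd_mul.mp hdvd with h' | h'
      · have := hP.prime.dvd_of_dvd_pow h'
        calc P.natDegree ≤ (X : Polynomial (ZMod 2)).natDegree :=
              Polynomial.natDegree_le_of_dvd this X_ne_zero
          _ = 1 := natDegree_X
      · have := hP.prime.dvd_of_dvd_pow h'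
        calc P.natDegree ≤ (X + 1 : Polynomial (ZMod 2)).natDegree :=
              Polynomial.natDegree_le_of_dvd this (by
                intro hc
                have := congrArg (Polynomial.eval 0) hc
                simp at this)
          _ = 1 := by compute_degree!
    omega
  -- x ^ p = 1
  have hxp : x ^ p = 1 := by
    have := FiniteField.pow_card_sub_one_eq_one x hx0
    rwa [hcard, ← hpm] at this
  -- geometric sum vanishes
  have hsum : (∑ i ∈ Finset.range p, x ^ i) = 0 := by
    have hgeo := geom_sum_mul x p
    rw [hxp, sub_self] at hgeo
    have hxm1 : x - 1 ≠ 0 := sub_ne_zero.mpr hx1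
    exact (mul_eq_zero.mp hgeo).resolve_right hxm1
  rw [← AdjoinRoot.mk_eq_zero, map_sum]
  simpa [hx, hf] using hsum
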